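/- Let F be a finite field, k ≥ 1, 0 ≤ t ≤ k − 1, let x_0, x_1, …, x_t be pairwise distinct elements of F, let y_1, …, y_t ∈ F and let s ∈ F. Then the number of polynomials f over F of degree less than k satisfying f(x_0) = s and f(x_i) = y_i for all 1 ≤ i ≤ t equals |F|^{k−1−t}. In particular, this number does not depend on the secret s. -/

import Mathlib

/-- Perfect privacy counting for Shamir's `(n, k)`-threshold scheme: over a finite field
`F`, for `k ≥ 1`, `t ≤ k - 1`, pairwise distinct points `x₀, x₁, …, x_t`, prescribed
share values `y₁, …, y_t ∈ F` and a secret `s ∈ F`, the number of polynomials `f` over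
`F` of degree less than `k` with `f(x₀) = s` and `f(xᵢ) = yᵢ` for `1 ≤ i ≤ t` is exactly
`|F|^(k - 1 - t)`; in particular it does not depend on the secret `s`. -/
theorem dske_shamir_privacy_count {F : Type*} [Field F] [Fintype F]
    (k t : ℕ) (hk : 1 ≤ k) (ht : t ≤ k - 1)
    (x : Fin (t + 1) → F) (hx : Function.Injective x)
    (y : Fin t → F) (s : F) :
    Set.ncard {f : Polynomial F | f.degree < (k : WithBot ℕ) ∧
        f.eval (x 0) = s ∧ ∀ i : Fin t, f.eval (x i.succ) = y i} =
      Fintype.card F ^ (k - 1 - t) := by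
  classical
  have htk : t + 1 ≤ k := by omega
  set V := Polynomial.degreeLT F k with hV
  let L : V →ₗ[F] (Fin (t + 1) → F) :=
    (LinearMap.pi fun i => Polynomial.leval (x i)).comp V.subtype
  have hLval : ∀ (f : V) (i : Fin (t + 1)), L f i = (f : Polynomial F).eval (x i) := by
    intro f i; rfl
  have hxinj : Set.InjOn x (Finset.univ : Finset (Fin (t + 1))) := hx.injOn
  have hsurj : Function.Surjective L := by
    intro v
    refine ⟨⟨Lagrange.interpolate Finset.univ x v, ?_⟩, ?_⟩
    · rw [Polynomial.mem_degreeLT]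
      refine lt_of_lt_of_le (Lagrange.degree_interpolate_lt _ hxinj) ?_
      simp only [Finset.card_univ, Fintype.card_fin]
      exact_mod_cast htk
    · ext i
      rw [hLval]
      exact Lagrange.eval_interpolate_at_node _ hxinj (Finset.mem_univ i)
  -- dimensions
  have e : V ≃ₗ[F] (Fin k → F) := Polynomial.degreeLTEquiv F k
  haveI : Module.Finite F V := Module.Finite.equiv e.symm
  haveI : Finite V := Finite.of_equiv _ e.symm.toEquiv
  have hfinV : Module.finrank F V = k := by
    rw [e.finrank_eq, Module.finrank_fin_fun]
  have hfinker : Module.finrank F (LinearMap.ker L) = k - (t + 1) := by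
    have h1 := LinearMap.finrank_range_add_finrank_ker L
    rw [LinearMap.range_eq_top.mpr hsurj, finrank_top, Module.finrank_fin_fun, hfinV] at h1
    omega
  haveI : Fintype (LinearMap.ker L) := Fintype.ofFinite _
  have hcard : Nat.card (LinearMap.ker L) = Fintype.card F ^ (k - 1 - t) := by
    rw [Nat.card_eq_fintype_card, Module.card_eq_pow_finrank (K := F), hfinker]
    congr 1
    omega
  -- the fiber over b
  set b : Fin (t + 1) → F := Fin.cons s y with hb
  obtain ⟨p₀, hp₀⟩ := hsurj b
  set S : Set (Polynomial F) := {f : Polynomial F | f.degree < (k : WithBot ℕ) ∧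
        f.eval (x 0) = s ∧ ∀ i : Fin t, f.eval (x i.succ) = y i} with hS
  have hmem : ∀ f : S, (f : Polynomial F) ∈ V := fun f =>
    Polynomial.mem_degreeLT.mpr f.2.1
  have hLmem : ∀ f : S, L ⟨f, hmem f⟩ = b := by
    intro f
    ext i
    rw [hLval]
    refine Fin.cases ?_ ?_ i
    · simpa [hb] using f.2.2.1
    · intro j
      simpa [hb] using f.2.2.2 j
  have equiv : S ≃ LinearMap.ker L :=
    { toFun := fun f => ⟨⟨f, hmem f⟩ - p₀, by
        simp [LinearMap.mem_ker, map_sub, hLmem f, hp₀]⟩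
      invFun := fun g => ⟨((g : V) + p₀ : V), by
        have hdeg : ((g : V) + p₀ : V).1.degree < (k : WithBot ℕ) :=
          Polynomial.mem_degreeLT.mp ((g : V) + p₀).2
        have hLg : L ((g : V) + p₀) = b := by
          rw [map_add, g.2, zero_add, hp₀]
        constructor
        · exact hdeg
        constructor
        · have := congrFun hLg 0
          rw [hLval] at this
          simpa [hb] using this
        · intro i
          have := congrFun hLg i.succ
          rw [hLval] at this
          simpa [hb] using this⟩
      left_inv := by
        intro f
        ext
        simp
      right_inv := by
        intro g
        ext
        simp }
  rw [← Nat.card_coe_set_eq, Nat.card_congr equiv, hcard]
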